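/- Let G = (V, E⁺, E⁰) be a fuzzy graph with weight function ω and let k be a nonnegative integer. If u and v are two distinct vertices with |N⁺(u) ∩ N⁺(v)| > k, then in every clustering of G of cost at most k, the vertices u and v lie in the same cluster. -/

import Mathlib

open Finset

/-- A fuzzy graph: a finite vertex set with disjoint symmetric irreflexive sets of
'real' edges and 'fuzzy' edges; remaining pairs of distinct vertices are 'nonedges'. -/
structure FuzzyGraph (V : Type*) where
  real : V → V → Bool
  fuzzy : V → V → Bool
  real_symm : ∀ u v, real u v = real v u
  fuzzy_symm : ∀ u v, fuzzy u v = fuzzy v u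
  real_irrefl : ∀ v, real v v = false
  fuzzy_irrefl : ∀ v, fuzzy v v = false
  not_real_and_fuzzy : ∀ u v, ¬(real u v = true ∧ fuzzy u v = true)

namespace FuzzyGraph

variable {V : Type*}

/-- The pair `{u,v}` is a nonedge: distinct, neither a real nor a fuzzy edge. -/
def nonedge (G : FuzzyGraph V) (u v : V) : Prop :=
  u ≠ v ∧ ¬G.real u v ∧ ¬G.fuzzy u v

instance (G : FuzzyGraph V) [DecidableEq V] (u v : V) : Decidable (G.nonedge u v) :=
  inferInstanceAs (Decidable (u ≠ v ∧ ¬G.real u v ∧ ¬G.fuzzy u v))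

/-- The simple graph `G⁽⁺⁾` of real edges. -/
def plus (G : FuzzyGraph V) : SimpleGraph V where
  Adj u v := G.real u v
  symm := by refine ⟨?_⟩; intro u v h; rwa [G.real_symm] at h
  loopless := by refine ⟨?_⟩; intro v h; rw [G.real_irrefl] at h; exact Bool.noConfusion h

/-- The simple graph `G⁽⁰⁾` of fuzzy edges. -/
def zero (G : FuzzyGraph V) : SimpleGraph V where
  Adj u v := G.fuzzy u v
  symm := by refine ⟨?_⟩; intro u v h; rwa [G.fuzzy_symm] at h
  loopless := by refine ⟨?_⟩; intro v h; rw [G.fuzzy_irrefl] at h; exact Bool.noConfusion h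

variable [Fintype V] [DecidableEq V]

/-- The real neighborhood `N⁺(v)`. -/
def realNbrs (G : FuzzyGraph V) (v : V) : Finset V := univ.filter fun u => G.real v u

/-- The fuzzy neighborhood `N⁰(v)`. -/
def fuzzyNbrs (G : FuzzyGraph V) (v : V) : Finset V := univ.filter fun u => G.fuzzy v u

/-- The nonneighborhood `N⁻(v)`. -/
def nonNbrs (G : FuzzyGraph V) (v : V) : Finset V := univ.filter fun u => G.nonedge v u

/-- The closed real neighborhood `N⁺[v]`. -/
def closedRealNbrs (G : FuzzyGraph V) (v : V) : Finset V := insert v (G.realNbrs v)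

end FuzzyGraph

/-- `ω` is a valid weight function for `G`: symmetric nonnegative integer weights,
zero exactly on the fuzzy edges. -/
def IsWeight {V : Type*} [Fintype V] [DecidableEq V] (G : FuzzyGraph V) (ω : V → V → ℕ) : Prop :=
  (∀ u v, ω u v = ω v u) ∧ ∀ u v : V, u ≠ v → (ω u v = 0 ↔ G.fuzzy u v)

/-- The unit weight function: weight 1 on real edges and nonedges, 0 on fuzzy edges. -/
def unitW {V : Type*} (G : FuzzyGraph V) : V → V → ℕ := fun u v => if G.fuzzy u v then 0 else 1

/-- Two vertices lie in a common cluster of the clustering `𝒞`. -/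
def together {V : Type*} [Fintype V] [DecidableEq V] (𝒞 : Finpartition (univ : Finset V))
    (u v : V) : Prop :=
  ∃ C ∈ 𝒞.parts, u ∈ C ∧ v ∈ C

instance {V : Type*} [Fintype V] [DecidableEq V] (𝒞 : Finpartition (univ : Finset V)) (u v : V) :
    Decidable (together 𝒞 u v) :=
  inferInstanceAs (Decidable (∃ C ∈ 𝒞.parts, u ∈ C ∧ v ∈ C))

/-- The cost of a clustering: total weight of real edges between different clusters
plus total weight of nonedges inside clusters.  (Each unordered pair is counted twice
in the sum over ordered pairs, whence the division by 2.) -/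
def cost {V : Type*} [Fintype V] [DecidableEq V] (G : FuzzyGraph V) (ω : V → V → ℕ)
    (𝒞 : Finpartition (univ : Finset V)) : ℕ :=
  (∑ p ∈ univ.offDiag,
      ((if G.real p.1 p.2 ∧ ¬together 𝒞 p.1 p.2 then ω p.1 p.2 else 0) +
       (if G.nonedge p.1 p.2 ∧ together 𝒞 p.1 p.2 then ω p.1 p.2 else 0))) / 2

/-- A clique in `G⁽⁺⁾`: pairwise real-adjacent vertices. -/
def IsRealClique {V : Type*} (G : FuzzyGraph V) (K : Finset V) : Prop :=
  ∀ u ∈ K, ∀ v ∈ K, u ≠ v → G.real u v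

/-- A clique in `G⁽⁰⁾`: pairwise fuzzy-adjacent vertices. -/
def IsFuzzyClique {V : Type*} (G : FuzzyGraph V) (K : Finset V) : Prop :=
  ∀ u ∈ K, ∀ v ∈ K, u ≠ v → G.fuzzy u v

/-- A critical clique of `G⁽⁺⁾`: a clique with `⋂_{x ∈ K} N⁺[x] = ⋃_{x ∈ K} N⁺[x]`,
inclusion-wise maximal with this property. -/
def IsCriticalClique {V : Type*} [Fintype V] [DecidableEq V] (G : FuzzyGraph V)
    (K : Finset V) : Prop :=
  IsRealClique G K ∧ K.inf (G.closedRealNbrs) = K.sup (G.closedRealNbrs) ∧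
    ∀ K' : Finset V, K ⊆ K' → IsRealClique G K' →
      K'.inf (G.closedRealNbrs) = K'.sup (G.closedRealNbrs) → K' = K

/-- A simple graph is `c`-closed if every pair of distinct nonadjacent vertices has
fewer than `c` common neighbors. -/
def IsCClosed {V : Type*} (H : SimpleGraph V) (c : ℕ) : Prop :=
  ∀ u v : V, u ≠ v → ¬H.Adj u v → Set.ncard {w | H.Adj u w ∧ H.Adj v w} < c

/-- A fuzzy graph is fuzzy `c`-closed if its fuzzy edge graph `G⁽⁰⁾` is `c`-closed. -/
def FuzzyCClosed {V : Type*} [Fintype V] [DecidableEq V] (G : FuzzyGraph V) (c : ℕ) : Prop :=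
  ∀ u v : V, u ≠ v → ¬G.fuzzy u v → ((G.fuzzyNbrs u) ∩ (G.fuzzyNbrs v)).card < c

/-- If `|N⁺(u) ∩ N⁺(v)| > k` then in every clustering of cost at most `k`,
the vertices `u` and `v` lie in the same cluster. -/
theorem stmt0 {V : Type*} [Fintype V] [DecidableEq V]
    (G : FuzzyGraph V) (ω : V → V → ℕ) (hω : IsWeight G ω) (k : ℕ)
    (u v : V) (huv : u ≠ v)
    (hcommon : k < ((G.realNbrs u) ∩ (G.realNbrs v)).card)
    (𝒞 : Finpartition (Finset.univ : Finset V)) (hcost : cost G ω 𝒞 ≤ k) :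
    together 𝒞 u v := by
  classical
  by_contra hsep
  have htrans : ∀ a b c : V, together 𝒞 a b → together 𝒞 c b → together 𝒞 a c := by
    rintro a b c ⟨C, hC, ha, hb⟩ ⟨D, hD, hc, hb'⟩
    exact ⟨C, hC, ha, (𝒞.eq_of_mem_parts hD hC hb' hb) ▸ hc⟩
  set S := (G.realNbrs u ∩ G.realNbrs v) with hS
  have hwS : ∀ w ∈ S, w ≠ u ∧ w ≠ v ∧ G.real u w ∧ G.real v w := by
    intro w hw
    simp only [hS, Finset.mem_inter, FuzzyGraph.realNbrs, Finset.mem_filter] at hw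
    obtain ⟨⟨-, h1⟩, -, h2⟩ := hw
    refine ⟨?_, ?_, h1, h2⟩
    · rintro rfl; rw [G.real_irrefl] at h1; exact Bool.noConfusion h1
    · rintro rfl; rw [G.real_irrefl] at h2; exact Bool.noConfusion h2
  set x : V → V := fun w => if together 𝒞 u w then v else u with hxdef
  have hx : ∀ w ∈ S, G.real (x w) w = true ∧ ¬ together 𝒞 (x w) w ∧ x w ≠ w := by
    intro w hw
    obtain ⟨hwu, hwv, h1, h2⟩ := hwS w hw
    by_cases ht : together 𝒞 u w
    · have : x w = v := if_pos ht
      rw [this]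
      exact ⟨h2, fun hvw => hsep (htrans u w v ht hvw), fun h => hwv h.symm⟩
    · have : x w = u := if_neg ht
      rw [this]
      exact ⟨h1, ht, fun h => hwu h.symm⟩
  have hx_mem : ∀ w, x w = u ∨ x w = v := by
    intro w; by_cases ht : together 𝒞 u w
    · right; exact if_pos ht
    · left; exact if_neg ht
  set F : V × V → ℕ := fun p =>
      (if G.real p.1 p.2 ∧ ¬together 𝒞 p.1 p.2 then ω p.1 p.2 else 0) +
      (if G.nonedge p.1 p.2 ∧ together 𝒞 p.1 p.2 then ω p.1 p.2 else 0) with hF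
  have hFone : ∀ a b : V, G.real a b = true → ¬ together 𝒞 a b → a ≠ b → 1 ≤ F (a, b) := by
    intro a b hr htg hab
    have hpos : ω a b ≠ 0 := by
      intro h0
      have := (hω.2 a b hab).1 h0
      exact G.not_real_and_fuzzy a b ⟨hr, this⟩
    calc 1 ≤ ω a b := Nat.one_le_iff_ne_zero.2 hpos
      _ = (if G.real a b ∧ ¬together 𝒞 a b then ω a b else 0) := by rw [if_pos ⟨hr, htg⟩]
      _ ≤ F (a, b) := Nat.le_add_right _ _
  set T1 : Finset (V × V) := S.image (fun w => (x w, w)) with hT1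
  set T2 : Finset (V × V) := S.image (fun w => (w, x w)) with hT2
  have hdisj : Disjoint T1 T2 := by
    rw [Finset.disjoint_left]
    rintro p hp1 hp2
    simp only [hT1, hT2, Finset.mem_image] at hp1 hp2
    obtain ⟨w, hw, rfl⟩ := hp1
    obtain ⟨w', hw', heq⟩ := hp2
    have : w = x w' := (Prod.mk.injEq _ _ _ _ ▸ heq).2.symm
    obtain ⟨hwu, hwv, -, -⟩ := hwS w hw
    rcases hx_mem w' with h | h <;> rw [h] at this
    · exact hwu this
    · exact hwv this
  have hsub : T1 ∪ T2 ⊆ Finset.univ.offDiag := by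
    intro p hp
    rcases Finset.mem_union.1 hp with hp | hp <;>
      simp only [hT1, hT2, Finset.mem_image] at hp <;>
      obtain ⟨w, hw, rfl⟩ := hp <;>
      obtain ⟨-, -, hne⟩ := hx w hw <;>
      simp [Finset.mem_offDiag]
    · exact hne
    · exact fun h => hne h.symm
  have hcard1 : S.card ≤ ∑ p ∈ T1, F p := by
    rw [hT1, Finset.sum_image (by intro a _ b _ h; exact (Prod.mk.injEq _ _ _ _ ▸ h).2)]
    calc S.card = ∑ _w ∈ S, 1 := by simp
      _ ≤ _ := Finset.sum_le_sum fun w hw => by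
          obtain ⟨hr, htg, hne⟩ := hx w hw
          exact hFone _ _ hr htg hne
  have hcard2 : S.card ≤ ∑ p ∈ T2, F p := by
    rw [hT2, Finset.sum_image (by intro a _ b _ h; exact (Prod.mk.injEq _ _ _ _ ▸ h).1)]
    calc S.card = ∑ _w ∈ S, 1 := by simp
      _ ≤ _ := Finset.sum_le_sum fun w hw => by
          obtain ⟨hr, htg, hne⟩ := hx w hw
          have hr' : G.real w (x w) = true := by rw [G.real_symm]; exact hr
          have htg' : ¬ together 𝒞 w (x w) := by
            rintro ⟨C, hC, h1, h2⟩; exact htg ⟨C, hC, h2, h1⟩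
          exact hFone _ _ hr' htg' fun h => hne h.symm
  have hbig : 2 * S.card ≤ ∑ p ∈ Finset.univ.offDiag, F p := by
    calc 2 * S.card = S.card + S.card := two_mul _
      _ ≤ ∑ p ∈ T1, F p + ∑ p ∈ T2, F p := Nat.add_le_add hcard1 hcard2
      _ = ∑ p ∈ T1 ∪ T2, F p := (Finset.sum_union hdisj).symm
      _ ≤ _ := Finset.sum_le_sum_of_subset hsub
  have : S.card ≤ cost G ω 𝒞 := by
    rw [cost, Nat.le_div_iff_mul_le (by norm_num)]
    calc S.card * 2 = 2 * S.card := Nat.mul_comm _ _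
      _ ≤ _ := hbig
  omega
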